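/- For the Möbius map f_a(z) = (a - z)/(1 - a z) with 0 < a < 1, the majorant series sum a + (1 - a^2) * Σ_{n≥1} a^{n-1} r^n exceeds 1 if and only if r > 1/(1 + 2a), for r ∈ (0,1). -/
import Mathlib


/-- For the Möbius map `f_a(z) = (a - z)/(1 - a z)` with `0 < a < 1`, the majorant series
`a + (1 - a^2) * Σ_{n≥1} a^{n-1} r^n` exceeds `1` iff `r > 1/(1+2a)`, for `r ∈ (0,1)`. -/
theorem stmt0 (a r : ℝ) (ha : 0 < a) (ha1 : a < 1) (hr : r ∈ Set.Ioo (0:ℝ) 1) :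
    a + (1 - a^2) * ∑' n : ℕ, a ^ n * r ^ (n + 1) > 1 ↔ r > 1 / (1 + 2 * a) := by
  obtain ⟨hr0, hr1⟩ := hr
  have har : a * r < 1 := by nlinarith
  have har0 : 0 < 1 - a * r := by linarith
  have hsum : ∑' n : ℕ, a ^ n * r ^ (n + 1) = r / (1 - a * r) := by
    have : ∀ n : ℕ, a ^ n * r ^ (n + 1) = r * (a * r) ^ n := by
      intro n; rw [pow_succ, mul_pow]; ring
    rw [tsum_congr this, tsum_mul_left, tsum_geometric_of_lt_one (by positivity) har,
      div_eq_mul_inv]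
  rw [hsum]
  set s := r / (1 - a * r) with hs
  have hseq : s * (1 - a * r) = r := div_mul_cancel₀ r (ne_of_gt har0)
  have h2a : (0:ℝ) < 1 + 2 * a := by linarith
  rw [gt_iff_lt, gt_iff_lt, div_lt_iff₀ h2a]
  constructor <;> intro h <;> nlinarith
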